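/- Let k < 0, let a < b, and let g : [a,b] → ℝ be a C², positive-valued, distance-like function. Suppose that for every t₁, t₂ with a ≤ t₁ < t₂ ≤ b there exist u ∈ ℝ and v > 0 with g_k(t₁; u, v) = g(t₁), g_k(t₂; u, v) = g(t₂), and g(t) ≥ g_k(t; u, v) for all t ∈ [t₁, t₂]. Then g''(t) ≤ √(−k)·(1 − (g'(t))²)·coth(√(−k)·g(t)) holds for all t ∈ [a,b]. -/

import Mathlib

open Set Topology Filter

noncomputable def arcosh (x : ℝ) : ℝ := Real.log (x + Real.sqrt (x ^ 2 - 1))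

noncomputable def coth (x : ℝ) : ℝ := Real.cosh x / Real.sinh x

/-- The hyperbolic comparison function. -/
noncomputable def gHyp (k u v t : ℝ) : ℝ :=
  (1 / Real.sqrt (-k)) *
    arcosh (((u ^ 2 + v ^ 2) * Real.exp (-(Real.sqrt (-k)) * t) +
      Real.exp (Real.sqrt (-k) * t)) / (2 * v))

lemma arcosh_nonneg {x : ℝ} (hx : 1 ≤ x) : 0 ≤ arcosh x :=
  Real.log_nonneg (by nlinarith [Real.sqrt_nonneg (x ^ 2 - 1)])

lemma cosh_arcosh {x : ℝ} (hx : 1 ≤ x) : Real.cosh (arcosh x) = x := by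
  have h1 : (0:ℝ) ≤ x ^ 2 - 1 := by nlinarith
  have h2 : Real.sqrt (x ^ 2 - 1) ^ 2 = x ^ 2 - 1 := Real.sq_sqrt h1
  have h3 : (0:ℝ) < x + Real.sqrt (x ^ 2 - 1) := by nlinarith [Real.sqrt_nonneg (x ^ 2 - 1)]
  rw [arcosh, Real.cosh_eq, Real.exp_log h3, Real.exp_neg, Real.exp_log h3]
  field_simp
  nlinarith [h2]

lemma deriv_nonneg_left {f : ℝ → ℝ} {c d f' : ℝ} (hcd : c < d)
    (hf : HasDerivWithinAt f f' (Icc c d) c) (h0 : f c = 0)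
    (hge : ∀ t ∈ Icc c d, 0 ≤ f t) : 0 ≤ f' := by
  rw [hasDerivWithinAt_iff_tendsto_slope] at hf
  have hne : (𝓝[Icc c d \ {c}] c).NeBot := by
    rw [← mem_closure_iff_nhdsWithin_neBot]
    refine closure_mono (show Ioc c d ⊆ Icc c d \ {c} from fun x hx => ⟨⟨hx.1.le, hx.2⟩, ne_of_gt hx.1⟩) ?_
    rw [closure_Ioc hcd.ne]
    exact ⟨le_refl c, hcd.le⟩
  refine ge_of_tendsto hf ?_
  filter_upwards [self_mem_nhdsWithin] with t ht
  rw [slope_def_field, h0, sub_zero]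
  have htc : c < t := lt_of_le_of_ne ht.1.1 (fun h => ht.2 h.symm)
  exact div_nonneg (hge t ht.1) (by linarith)

lemma deriv_nonpos_right {f : ℝ → ℝ} {c d f' : ℝ} (hcd : c < d)
    (hf : HasDerivWithinAt f f' (Icc c d) d) (h0 : f d = 0)
    (hge : ∀ t ∈ Icc c d, 0 ≤ f t) : f' ≤ 0 := by
  rw [hasDerivWithinAt_iff_tendsto_slope] at hf
  have hne : (𝓝[Icc c d \ {d}] d).NeBot := by
    rw [← mem_closure_iff_nhdsWithin_neBot]
    refine closure_mono (show Ico c d ⊆ Icc c d \ {d} from fun x hx => ⟨⟨hx.1, hx.2.le⟩, ne_of_lt hx.2⟩) ?_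
    rw [closure_Ico hcd.ne]
    exact ⟨hcd.le, le_refl d⟩
  refine le_of_tendsto hf ?_
  filter_upwards [self_mem_nhdsWithin] with t ht
  rw [slope_def_field, h0, sub_zero]
  have htc : t < d := lt_of_le_of_ne ht.1.2 ht.2
  exact div_nonpos_of_nonneg_of_nonpos (hge t ht.1) (by linarith)

theorem diff_ineq_rev_of_hyp_comparison (k : ℝ) (hk : k < 0) (a b : ℝ) (hab : a < b) (g : ℝ → ℝ)
    (hC2 : ContDiffOn ℝ 2 g (Icc a b))
    (hpos : ∀ t ∈ Icc a b, 0 < g t)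
    (hnonexp : ∀ t₁ ∈ Icc a b, ∀ t₂ ∈ Icc a b, |g t₁ - g t₂| ≤ |t₁ - t₂|)
    (hdistlike : ∀ t₁ ∈ Icc a b, ∀ t₂ ∈ Icc a b, |t₁ - t₂| ≤ g t₁ + g t₂)
    (hcmp : ∀ t₁ t₂, a ≤ t₁ → t₁ < t₂ → t₂ ≤ b → ∃ u v : ℝ, 0 < v ∧
      gHyp k u v t₁ = g t₁ ∧ gHyp k u v t₂ = g t₂ ∧
      ∀ t ∈ Icc t₁ t₂, g t ≥ gHyp k u v t) :
    ∀ t ∈ Icc a b, (derivWithin (derivWithin g (Icc a b)) (Icc a b)) t ≤ Real.sqrt (-k) * (1 - ((derivWithin g (Icc a b)) t) ^ 2) * coth (Real.sqrt (-k) * g t) := by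
  intro t₀ ht₀
  set s : ℝ := Real.sqrt (-k) with hs_def
  have hs : 0 < s := Real.sqrt_pos.2 (by linarith)
  have hUD : UniqueDiffOn ℝ (Icc a b) := uniqueDiffOn_Icc hab
  set g1 : ℝ → ℝ := derivWithin g (Icc a b) with hg1_def
  set g2 : ℝ → ℝ := derivWithin g1 (Icc a b) with hg2_def
  have hgd : ∀ t ∈ Icc a b, HasDerivWithinAt g (g1 t) (Icc a b) t := fun t ht =>
    ((hC2.differentiableOn (by norm_num)) t ht).hasDerivWithinAt
  have hC1 : ContDiffOn ℝ 1 g1 (Icc a b) := hC2.derivWithin hUD (by norm_num)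
  have hg1d : ∀ t ∈ Icc a b, HasDerivWithinAt g1 (g2 t) (Icc a b) t := fun t ht =>
    ((hC1.differentiableOn (by norm_num)) t ht).hasDerivWithinAt
  set ψ : ℝ → ℝ := fun t => Real.cosh (s * g t) with hψ_def
  have hψd : ∀ t ∈ Icc a b, HasDerivWithinAt ψ (Real.sinh (s * g t) * (s * g1 t)) (Icc a b) t := by
    intro t ht
    exact (Real.hasDerivAt_cosh (s * g t)).comp_hasDerivWithinAt t ((hgd t ht).const_mul s)
  set H : ℝ → ℝ := derivWithin ψ (Icc a b) with hH_def
  have hH : ∀ t ∈ Icc a b, H t = Real.sinh (s * g t) * (s * g1 t) := fun t ht =>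
    (hψd t ht).derivWithin (hUD t ht)
  have hψH : ∀ t ∈ Icc a b, HasDerivWithinAt ψ (H t) (Icc a b) t := by
    intro t ht; rw [hH t ht]; exact hψd t ht
  -- continuous extension of ψ
  set cl : ℝ → ℝ := fun t => max a (min t b) with hcl_def
  have hcl_mem : ∀ t, cl t ∈ Icc a b := fun t =>
    ⟨le_max_left _ _, max_le hab.le (min_le_right _ _)⟩
  have hcl_eq : ∀ t ∈ Icc a b, cl t = t := fun t ht => by
    rw [hcl_def]; simp only; rw [min_eq_left ht.2, max_eq_right ht.1]
  set ψt : ℝ → ℝ := fun t => Real.cosh (s * g (cl t)) with hψt_def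
  have hψt_cont : Continuous ψt := by
    apply Real.continuous_cosh.comp
    apply continuous_const.mul
    exact hC2.continuousOn.comp_continuous
      (continuous_const.max (continuous_id.min continuous_const)) hcl_mem
  have hψt_eq : ∀ t ∈ Icc a b, ψt t = ψ t := fun t ht => by
    rw [hψt_def]; simp only; rw [hcl_eq t ht]
  -- the key comparison inequality
  have key : ∀ t₁ t₂, a ≤ t₁ → t₁ < t₂ → t₂ ≤ b →
      H t₂ - H t₁ ≤ s ^ 2 * ∫ x in t₁..t₂, ψt x := by
    intro t₁ t₂ h1 h12 h2
    have ht₁ : t₁ ∈ Icc a b := ⟨h1, le_trans h12.le h2⟩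
    have ht₂ : t₂ ∈ Icc a b := ⟨le_trans h1 h12.le, h2⟩
    have hsub : Icc t₁ t₂ ⊆ Icc a b := Icc_subset_Icc h1 h2
    obtain ⟨u, v, hv, he1, he2, hge⟩ := hcmp t₁ t₂ h1 h12 h2
    set A : ℝ := u ^ 2 + v ^ 2 with hA_def
    have hA : 0 < A := by positivity
    set φ : ℝ → ℝ := fun t => (A * Real.exp (-s * t) + Real.exp (s * t)) / (2 * v) with hφ_def
    set φ1 : ℝ → ℝ := fun t => (A * (-s) * Real.exp (-s * t) + s * Real.exp (s * t)) / (2 * v)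
      with hφ1_def
    have hφd : ∀ t : ℝ, HasDerivAt φ (φ1 t) t := by
      intro t
      have i1 : HasDerivAt (fun y : ℝ => -s * y) (-s) t := by
        simpa using (hasDerivAt_id t).const_mul (-s)
      have i2 : HasDerivAt (fun y : ℝ => s * y) s t := by
        simpa using (hasDerivAt_id t).const_mul s
      have e1 := i1.exp
      have e2 := i2.exp
      have h := ((e1.const_mul A).add e2).div_const (2 * v)
      rw [hφ_def, hφ1_def]
      refine h.congr_deriv ?_
      beta_reduce
      ring
    have hφ1d : ∀ t : ℝ, HasDerivAt φ1 (s ^ 2 * φ t) t := by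
      intro t
      have i1 : HasDerivAt (fun y : ℝ => -s * y) (-s) t := by
        simpa using (hasDerivAt_id t).const_mul (-s)
      have i2 : HasDerivAt (fun y : ℝ => s * y) s t := by
        simpa using (hasDerivAt_id t).const_mul s
      have h := (((i1.exp).const_mul (A * -s)).add ((i2.exp).const_mul s)).div_const (2 * v)
      rw [hφ1_def, hφ_def]
      refine h.congr_deriv ?_
      beta_reduce
      ring
    have harg : ∀ t : ℝ, 1 ≤ φ t := by
      intro t
      have hp : 0 < Real.exp (-s * t) := Real.exp_pos _
      have hq : 0 < Real.exp (s * t) := Real.exp_pos _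
      have hpq : Real.exp (-s * t) * Real.exp (s * t) = 1 := by
        rw [← Real.exp_add]
        norm_num
      have hvA : v ^ 2 ≤ A := by nlinarith [sq_nonneg u]
      rw [hφ_def]
      rw [le_div_iff₀ (by positivity)]
      have hApq : A * (Real.exp (-s * t) * Real.exp (s * t)) = A := by rw [hpq, mul_one]
      have h4 : 4 * A ≤ (A * Real.exp (-s * t) + Real.exp (s * t)) ^ 2 := by
        nlinarith [sq_nonneg (A * Real.exp (-s * t) - Real.exp (s * t)), hApq]
      nlinarith [h4, hvA, hv, mul_pos hA hp, hq, hp.le, hq.le]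
    have hgH : ∀ t : ℝ, Real.cosh (s * gHyp k u v t) = φ t ∧ 0 ≤ gHyp k u v t := by
      intro t
      have harg' := harg t
      have hx : gHyp k u v t = (1 / s) * arcosh (φ t) := by
        simp only [gHyp, ← hs_def, hφ_def, hA_def]
      constructor
      · rw [hx, show s * ((1 / s) * arcosh (φ t)) = arcosh (φ t) by field_simp]
        exact cosh_arcosh harg'
      · rw [hx]
        exact mul_nonneg (by positivity) (arcosh_nonneg harg')
    have hφle : ∀ t ∈ Icc t₁ t₂, φ t ≤ ψ t := by
      intro t ht
      rw [← (hgH t).1, hψ_def]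
      rw [Real.cosh_le_cosh]
      rw [abs_of_nonneg (mul_nonneg hs.le (hgH t).2),
        abs_of_nonneg (mul_nonneg hs.le (hpos t (hsub ht)).le)]
      exact mul_le_mul_of_nonneg_left (hge t ht) hs.le
    have hend1 : ψ t₁ - φ t₁ = 0 := by
      rw [hψ_def, ← (hgH t₁).1, he1]
      ring
    have hend2 : ψ t₂ - φ t₂ = 0 := by
      rw [hψ_def, ← (hgH t₂).1, he2]
      ring
    have hfnn : ∀ t ∈ Icc t₁ t₂, 0 ≤ ψ t - φ t := fun t ht => sub_nonneg.2 (hφle t ht)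
    have hd1 : φ1 t₁ ≤ H t₁ := by
      have hf : HasDerivWithinAt (fun t => ψ t - φ t) (H t₁ - φ1 t₁) (Icc t₁ t₂) t₁ :=
        ((hψH t₁ ht₁).mono hsub).sub (hφd t₁).hasDerivWithinAt
      have := deriv_nonneg_left h12 hf hend1 hfnn
      linarith
    have hd2 : H t₂ ≤ φ1 t₂ := by
      have hf : HasDerivWithinAt (fun t => ψ t - φ t) (H t₂ - φ1 t₂) (Icc t₁ t₂) t₂ :=
        ((hψH t₂ ht₂).mono hsub).sub (hφd t₂).hasDerivWithinAt
      have := deriv_nonpos_right h12 hf hend2 hfnn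
      linarith
    have hφcont : Continuous φ := by
      have c1 : Continuous fun t : ℝ => Real.exp (-s * t) :=
        Real.continuous_exp.comp (continuous_const.mul continuous_id)
      have c2 : Continuous fun t : ℝ => Real.exp (s * t) :=
        Real.continuous_exp.comp (continuous_const.mul continuous_id)
      rw [hφ_def]
      exact ((continuous_const.mul c1).add c2).div_const _
    have hint : (∫ x in t₁..t₂, s ^ 2 * φ x) = φ1 t₂ - φ1 t₁ :=
      intervalIntegral.integral_eq_sub_of_hasDerivAt (fun t _ => hφ1d t)
        ((continuous_const.mul hφcont).intervalIntegrable _ _)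
    have hmono : (∫ x in t₁..t₂, φ x) ≤ ∫ x in t₁..t₂, ψt x := by
      apply intervalIntegral.integral_mono_on h12.le (hφcont.intervalIntegrable _ _)
        (hψt_cont.intervalIntegrable _ _)
      intro x hx
      rw [hψt_eq x (hsub hx)]
      exact hφle x hx
    calc H t₂ - H t₁ ≤ φ1 t₂ - φ1 t₁ := by linarith
      _ = ∫ x in t₁..t₂, s ^ 2 * φ x := hint.symm
      _ = s ^ 2 * ∫ x in t₁..t₂, φ x := intervalIntegral.integral_const_mul _ _
      _ ≤ s ^ 2 * ∫ x in t₁..t₂, ψt x := mul_le_mul_of_nonneg_left hmono (sq_nonneg s)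
  -- the limiting argument
  have hsinh : 0 < Real.sinh (s * g t₀) := Real.sinh_pos_iff.2 (mul_pos hs (hpos t₀ ht₀))
  set D : ℝ := Real.cosh (s * g t₀) * (s * g1 t₀) * (s * g1 t₀) + Real.sinh (s * g t₀) * (s * g2 t₀) with hD_def
  have hHd : HasDerivWithinAt H D (Icc a b) t₀ := by
    have hF : HasDerivWithinAt (fun t => Real.sinh (s * g t) * (s * g1 t)) D (Icc a b) t₀ := by
      have h1 : HasDerivWithinAt (fun t => Real.sinh (s * g t))
          (Real.cosh (s * g t₀) * (s * g1 t₀)) (Icc a b) t₀ :=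
        by exact (Real.hasDerivAt_sinh (s * g t₀)).comp_hasDerivWithinAt t₀ ((hgd t₀ ht₀).const_mul s)
      have h2 : HasDerivWithinAt (fun t => s * g1 t) (s * g2 t₀) (Icc a b) t₀ :=
        (hg1d t₀ ht₀).const_mul s
      exact h1.mul h2
    exact hF.congr hH (hH t₀ ht₀)
  have hIt : HasDerivWithinAt (fun u => ∫ x in t₀..u, ψt x) (ψt t₀) (Icc a b) t₀ := by
    have : HasDerivAt (fun u => ∫ x in t₀..u, ψt x) (ψt t₀) t₀ :=
      intervalIntegral.integral_hasDerivAt_right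
        (hψt_cont.intervalIntegrable _ _)
        (hψt_cont.aestronglyMeasurable.stronglyMeasurableAtFilter)
        hψt_cont.continuousAt
    exact this.hasDerivWithinAt
  have hlim : D ≤ s ^ 2 * ψt t₀ := by
    have hne : (𝓝[Icc a b \ {t₀}] t₀).NeBot := by
      rw [← mem_closure_iff_nhdsWithin_neBot]
      rcases lt_or_eq_of_le ht₀.2 with h | h
      · refine closure_mono (show Ioc t₀ b ⊆ Icc a b \ {t₀} from
          fun x hx => ⟨⟨le_trans ht₀.1 hx.1.le, hx.2⟩, ne_of_gt hx.1⟩) ?_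
        rw [closure_Ioc h.ne]
        exact ⟨le_refl _, h.le⟩
      · refine closure_mono (show Ico a t₀ ⊆ Icc a b \ {t₀} from
          fun x hx => ⟨⟨hx.1, le_trans hx.2.le ht₀.2⟩, ne_of_lt hx.2⟩) ?_
        have hat : a < t₀ := by rw [← h] at hab; exact hab
        rw [closure_Ico hat.ne]
        exact ⟨ht₀.1, le_refl _⟩
    have h1 := hasDerivWithinAt_iff_tendsto_slope.1 hHd
    have h2 := (hasDerivWithinAt_iff_tendsto_slope.1 hIt).const_mul (s ^ 2)
    refine le_of_tendsto_of_tendsto h1 h2 ?_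
    filter_upwards [self_mem_nhdsWithin] with t ht
    obtain ⟨htmem, htne⟩ := ht
    have htne' : t ≠ t₀ := htne
    rcases lt_or_gt_of_ne htne' with hlt | hgt
    · -- t < t₀
      have hk := key t t₀ htmem.1 hlt ht₀.2
      have hsym : (∫ x in t₀..t, ψt x) = -∫ x in t..t₀, ψt x :=
        intervalIntegral.integral_symm t t₀
      rw [slope_def_field, slope_def_field, intervalIntegral.integral_same, sub_zero, hsym]
      have hden : t - t₀ < 0 := by linarith
      rw [show s ^ 2 * (-(∫ x in t..t₀, ψt x) / (t - t₀)) =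
        (s ^ 2 * -(∫ x in t..t₀, ψt x)) / (t - t₀) by ring]
      rw [div_le_div_right_of_neg hden]
      linarith [hk]
    · -- t₀ < t
      have hk := key t₀ t ht₀.1 hgt htmem.2
      rw [slope_def_field, slope_def_field, intervalIntegral.integral_same, sub_zero]
      have hden : (0:ℝ) < t - t₀ := by linarith
      rw [show s ^ 2 * ((∫ x in t₀..t, ψt x) / (t - t₀)) =
        (s ^ 2 * ∫ x in t₀..t, ψt x) / (t - t₀) by ring]
      exact div_le_div_of_nonneg_right hk hden.le
  -- conclude
  rw [hψt_eq t₀ ht₀, hψ_def] at hlim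
  rw [coth]
  rw [show s * (1 - g1 t₀ ^ 2) * (Real.cosh (s * g t₀) / Real.sinh (s * g t₀)) =
    (s * (1 - g1 t₀ ^ 2) * Real.cosh (s * g t₀)) / Real.sinh (s * g t₀) by ring]
  rw [le_div_iff₀ hsinh]
  rw [hD_def] at hlim
  nlinarith [hlim, hs, hsinh, mul_pos hs hsinh]
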